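/- Key technical lemma: Let η : ℝⁿ → ℝ and γ : ℝⁿ → ℝ₊ be continuous functions homogeneous in the bi-limit with common weights r₀, r_∞ and common degrees d₀, d_∞, with approximating functions η₀, η_∞ and γ₀, γ_∞. Assume that on ℝⁿ\{0}, γ(x) = 0 implies η(x) < 0, γ₀(x) = 0 implies η₀(x) < 0, and γ_∞(x) = 0 implies η_∞(x) < 0. Then there exists c* ∈ ℝ such that for all c ≥ c* and all x ∈ ℝⁿ\{0}: η(x) − c·γ(x) < 0, η₀(x) − c·γ₀(x) < 0, and η_∞(x) − c·γ_∞(x) < 0. -/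

import Mathlib

noncomputable def dil {n : ℕ} (r : Fin n → ℝ) (l : ℝ) (x : Fin n → ℝ) : Fin n → ℝ :=
  fun i => l ^ (r i) * x i

/-- `φ` is homogeneous in the 0-limit with associated triple `(r, d, φ₀)`. -/
def Homog0 {n : ℕ} (r : Fin n → ℝ) (d : ℝ) (φ φ₀ : (Fin n → ℝ) → ℝ) : Prop :=
  Continuous φ ∧ Continuous φ₀ ∧ φ₀ ≠ 0 ∧
    ∀ C : Set (Fin n → ℝ), IsCompact C → (0 : Fin n → ℝ) ∉ C →
      ∀ ε > (0:ℝ), ∃ l₀ > (0:ℝ), ∀ x ∈ C, ∀ l : ℝ, 0 < l → l ≤ l₀ →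
        |φ (dil r l x) / l ^ d - φ₀ x| ≤ ε

/-- `φ` is homogeneous in the ∞-limit with associated triple `(r, d, φinf)`. -/
def HomogInf {n : ℕ} (r : Fin n → ℝ) (d : ℝ) (φ φinf : (Fin n → ℝ) → ℝ) : Prop :=
  Continuous φ ∧ Continuous φinf ∧ φinf ≠ 0 ∧
    ∀ C : Set (Fin n → ℝ), IsCompact C → (0 : Fin n → ℝ) ∉ C →
      ∀ ε > (0:ℝ), ∃ linf > (0:ℝ), ∀ x ∈ C, ∀ l : ℝ, l ≥ linf →
        |φ (dil r l x) / l ^ d - φinf x| ≤ ε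


noncomputable def hnorm {n : ℕ} (r : Fin n → ℝ) (x : Fin n → ℝ) : ℝ :=
  ∑ i, |x i| ^ (r i)⁻¹

lemma dil_dil {n : ℕ} (r : Fin n → ℝ) {a b : ℝ} (ha : 0 ≤ a) (hb : 0 ≤ b)
    (x : Fin n → ℝ) : dil r a (dil r b x) = dil r (a * b) x := by
  funext i
  simp only [dil, Real.mul_rpow ha hb]
  ring

lemma dil_one {n : ℕ} (r : Fin n → ℝ) (x : Fin n → ℝ) : dil r 1 x = x := by
  funext i; simp [dil]

lemma dil_inv_self {n : ℕ} (r : Fin n → ℝ) {l : ℝ} (hl : 0 < l) (x : Fin n → ℝ) :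
    dil r l (dil r l⁻¹ x) = x := by
  rw [dil_dil r hl.le (inv_nonneg.2 hl.le), mul_inv_cancel₀ hl.ne', dil_one]

lemma dil_ne_zero {n : ℕ} (r : Fin n → ℝ) {l : ℝ} (hl : 0 < l) {x : Fin n → ℝ}
    (hx : x ≠ 0) : dil r l x ≠ 0 := by
  intro h
  apply hx
  funext i
  have := congrFun h i
  simp only [dil, Pi.zero_apply] at this ⊢
  have hpos : (0:ℝ) < l ^ (r i) := Real.rpow_pos_of_pos hl _
  exact (mul_eq_zero.1 this).resolve_left hpos.ne'

lemma hnorm_nonneg {n : ℕ} (r x : Fin n → ℝ) : 0 ≤ hnorm r x :=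
  Finset.sum_nonneg fun i _ => Real.rpow_nonneg (abs_nonneg _) _

lemma hnorm_dil {n : ℕ} {r : Fin n → ℝ} (hr : ∀ i, 0 < r i) {l : ℝ} (hl : 0 < l)
    (x : Fin n → ℝ) : hnorm r (dil r l x) = l * hnorm r x := by
  unfold hnorm dil
  rw [Finset.mul_sum]
  refine Finset.sum_congr rfl fun i _ => ?_
  have h1 : |l ^ (r i) * x i| = l ^ (r i) * |x i| := by
    rw [abs_mul, abs_of_pos (Real.rpow_pos_of_pos hl _)]
  rw [h1, Real.mul_rpow (Real.rpow_nonneg hl.le _) (abs_nonneg _),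
    ← Real.rpow_mul hl.le, mul_inv_cancel₀ (hr i).ne', Real.rpow_one]

lemma hnorm_eq_zero {n : ℕ} {r : Fin n → ℝ} (hr : ∀ i, 0 < r i) {x : Fin n → ℝ} :
    hnorm r x = 0 ↔ x = 0 := by
  unfold hnorm
  rw [Finset.sum_eq_zero_iff_of_nonneg fun i _ => Real.rpow_nonneg (abs_nonneg _) _]
  constructor
  · intro h; funext i
    have := h i (Finset.mem_univ i)
    rw [Real.rpow_eq_zero (abs_nonneg _) (inv_ne_zero (hr i).ne')] at this
    simpa using this
  · intro h i _; subst h; simp [Real.zero_rpow (inv_ne_zero (hr i).ne')]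

lemma hnorm_pos {n : ℕ} {r : Fin n → ℝ} (hr : ∀ i, 0 < r i) {x : Fin n → ℝ}
    (hx : x ≠ 0) : 0 < hnorm r x :=
  lt_of_le_of_ne (hnorm_nonneg r x) fun h => hx ((hnorm_eq_zero hr).1 h.symm)

lemma continuous_hnorm {n : ℕ} {r : Fin n → ℝ} (hr : ∀ i, 0 < r i) :
    Continuous (hnorm r) := by
  refine continuous_finset_sum _ fun i _ => ?_
  have h1 : Continuous fun y : ℝ => y ^ (r i)⁻¹ := by
    rw [continuous_iff_continuousAt]
    intro y
    exact Real.continuousAt_rpow_const y _ (Or.inr (inv_pos.2 (hr i)).le)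
  exact h1.comp (continuous_abs.comp (continuous_apply i))

/-- On a compact set where `g = 0 → f < 0`, some gain works. -/
lemma compact_gain {n : ℕ} {f g : (Fin n → ℝ) → ℝ} (hf : Continuous f)
    (hg : Continuous g) {K : Set (Fin n → ℝ)} (hK : IsCompact K)
    (hg0 : ∀ x ∈ K, 0 ≤ g x) (h : ∀ x ∈ K, g x = 0 → f x < 0) :
    ∃ c : ℝ, 0 ≤ c ∧ ∀ x ∈ K, f x - c * g x < 0 := by
  have hopen : ∀ c : ℕ, IsOpen {x : Fin n → ℝ | f x - (c:ℝ) * g x < 0} :=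
    fun c => isOpen_lt (hf.sub (continuous_const.mul hg)) continuous_const
  have hcov : K ⊆ ⋃ c : ℕ, {x | f x - (c:ℝ) * g x < 0} := by
    intro x hx
    rcases lt_or_eq_of_le (hg0 x hx) with hgpos | hgz
    · obtain ⟨c, hc⟩ := exists_nat_gt (f x / g x)
      exact Set.mem_iUnion.2 ⟨c, by
        have := (div_lt_iff₀ hgpos).1 hc
        simp only [Set.mem_setOf_eq]; linarith⟩
    · exact Set.mem_iUnion.2 ⟨0, by
        simp only [Set.mem_setOf_eq, Nat.cast_zero, zero_mul, sub_zero]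
        exact h x hx hgz.symm⟩
  obtain ⟨t, ht⟩ := hK.elim_finite_subcover _ hopen hcov
  refine ⟨(t.sup id : ℕ), Nat.cast_nonneg _, fun x hx => ?_⟩
  obtain ⟨i, hit, hxi⟩ := Set.mem_iUnion₂.1 (ht hx)
  have hle : (i : ℝ) ≤ (t.sup id : ℕ) := by
    exact_mod_cast Finset.le_sup (f := id) hit
  simp only [Set.mem_setOf_eq] at hxi
  nlinarith [hg0 x hx]

lemma sphere_compact {n : ℕ} {r : Fin n → ℝ} (hr : ∀ i, 0 < r i) {a : ℝ} :
    IsCompact {x : Fin n → ℝ | hnorm r x = a} := by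
  refine IsCompact.of_isClosed_subset (isCompact_univ_pi fun i =>
    isCompact_Icc (a := -(max a 1 ^ r i)) (b := max a 1 ^ r i)) ?_ ?_
  · exact isClosed_eq (continuous_hnorm hr) continuous_const
  · intro x hx
    simp only [Set.mem_setOf_eq] at hx
    intro i _
    have h1 : |x i| ^ (r i)⁻¹ ≤ a := by
      rw [← hx]
      unfold hnorm
      exact Finset.single_le_sum (f := fun j => |x j| ^ (r j)⁻¹)
        (fun j _ => Real.rpow_nonneg (abs_nonneg _) _) (Finset.mem_univ i)
    have h2 : |x i| ^ (r i)⁻¹ ≤ max a 1 := h1.trans (le_max_left _ _)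
    have h3 : |x i| ≤ max a 1 ^ r i := by
      have := Real.rpow_le_rpow (Real.rpow_nonneg (abs_nonneg _) _) h2 (hr i).le
      rwa [← Real.rpow_mul (abs_nonneg _), inv_mul_cancel₀ (hr i).ne',
        Real.rpow_one] at this
    rw [Set.mem_Icc]
    exact abs_le.1 h3

lemma annulus_compact {n : ℕ} {r : Fin n → ℝ} (hr : ∀ i, 0 < r i)
    {r' : Fin n → ℝ} (hr' : ∀ i, 0 < r' i) (a b : ℝ) :
    IsCompact {x : Fin n → ℝ | a ≤ hnorm r x ∧ hnorm r' x ≤ b} := by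
  refine IsCompact.of_isClosed_subset (isCompact_univ_pi fun i =>
    isCompact_Icc (a := -(max b 1 ^ r' i)) (b := max b 1 ^ r' i)) ?_ ?_
  · exact IsClosed.inter (isClosed_le continuous_const (continuous_hnorm hr))
      (isClosed_le (continuous_hnorm hr') continuous_const)
  · intro x hx
    simp only [Set.mem_setOf_eq] at hx
    intro i _
    have h1 : |x i| ^ (r' i)⁻¹ ≤ b := by
      refine le_trans ?_ hx.2
      unfold hnorm
      exact Finset.single_le_sum (f := fun j => |x j| ^ (r' j)⁻¹)
        (fun j _ => Real.rpow_nonneg (abs_nonneg _) _) (Finset.mem_univ i)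
    have h2 : |x i| ^ (r' i)⁻¹ ≤ max b 1 := h1.trans (le_max_left _ _)
    have h3 : |x i| ≤ max b 1 ^ r' i := by
      have := Real.rpow_le_rpow (Real.rpow_nonneg (abs_nonneg _) _) h2 (hr' i).le
      rwa [← Real.rpow_mul (abs_nonneg _), inv_mul_cancel₀ (hr' i).ne',
        Real.rpow_one] at this
    rw [Set.mem_Icc]
    exact abs_le.1 h3

lemma nmem_singleton_zero {n : ℕ} {x : Fin n → ℝ} (hx : x ≠ 0) :
    (0 : Fin n → ℝ) ∉ ({x} : Set (Fin n → ℝ)) := by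
  simp only [Set.mem_singleton_iff]
  exact fun h => hx h.symm

lemma homog0_nonneg {n : ℕ} {r : Fin n → ℝ} {d : ℝ} {γ γ0 : (Fin n → ℝ) → ℝ}
    (h : Homog0 r d γ γ0) (hγ : ∀ x, 0 ≤ γ x) {x : Fin n → ℝ} (hx : x ≠ 0) :
    0 ≤ γ0 x := by
  by_contra hneg
  push_neg at hneg
  obtain ⟨l₀, hl₀, hap⟩ := h.2.2.2 {x} isCompact_singleton (nmem_singleton_zero hx)
    (-γ0 x / 2) (by linarith)
  have := hap x rfl l₀ hl₀ le_rfl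
  have hq : 0 ≤ γ (dil r l₀ x) / l₀ ^ d :=
    div_nonneg (hγ _) (Real.rpow_pos_of_pos hl₀ _).le
  rw [abs_le] at this
  linarith [this.2]

lemma homogInf_nonneg {n : ℕ} {r : Fin n → ℝ} {d : ℝ} {γ γinf : (Fin n → ℝ) → ℝ}
    (h : HomogInf r d γ γinf) (hγ : ∀ x, 0 ≤ γ x) {x : Fin n → ℝ} (hx : x ≠ 0) :
    0 ≤ γinf x := by
  by_contra hneg
  push_neg at hneg
  obtain ⟨l₀, hl₀, hap⟩ := h.2.2.2 {x} isCompact_singleton (nmem_singleton_zero hx)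
    (-γinf x / 2) (by linarith)
  have := hap x rfl l₀ le_rfl
  have hq : 0 ≤ γ (dil r l₀ x) / l₀ ^ d :=
    div_nonneg (hγ _) (Real.rpow_pos_of_pos hl₀ _).le
  rw [abs_le] at this
  linarith [this.2]

lemma homog0_scale {n : ℕ} {r : Fin n → ℝ} {d : ℝ} {φ φ₀ : (Fin n → ℝ) → ℝ}
    (h : Homog0 r d φ φ₀) {x : Fin n → ℝ} (hx : x ≠ 0) {lam : ℝ} (hlam : 0 < lam) :
    φ₀ (dil r lam x) = lam ^ d * φ₀ x := by
  have hld : (0:ℝ) < lam ^ d := Real.rpow_pos_of_pos hlam _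
  have key : ∀ ε > (0:ℝ), |φ₀ (dil r lam x) - lam ^ d * φ₀ x| ≤ ε := by
    intro ε hε
    obtain ⟨l₁, hl₁, hap₁⟩ := h.2.2.2 {dil r lam x} isCompact_singleton
      (nmem_singleton_zero (dil_ne_zero r hlam hx)) (ε/2) (by linarith)
    obtain ⟨l₂, hl₂, hap₂⟩ := h.2.2.2 {x} isCompact_singleton
      (nmem_singleton_zero hx) (ε/(2 * lam ^ d)) (by positivity)
    set l := min l₁ (l₂ / lam) with hldef
    have hlpos : 0 < l := lt_min hl₁ (div_pos hl₂ hlam)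
    have h1 := hap₁ _ rfl l hlpos (min_le_left _ _)
    have h2 := hap₂ x rfl (l * lam) (mul_pos hlpos hlam)
      (by rw [← div_mul_cancel₀ l₂ hlam.ne']
          exact mul_le_mul_of_nonneg_right (min_le_right _ _) hlam.le)
    rw [dil_dil r hlpos.le hlam.le] at h1
    have hmul : (l * lam) ^ d = l ^ d * lam ^ d := Real.mul_rpow hlpos.le hlam.le
    have hA : φ (dil r (l * lam) x) / l ^ d
        = lam ^ d * (φ (dil r (l * lam) x) / (l * lam) ^ d) := by
      rw [hmul]
      field_simp
    rw [hA] at h1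
    calc |φ₀ (dil r lam x) - lam ^ d * φ₀ x|
        ≤ |lam ^ d * (φ (dil r (l * lam) x) / (l * lam) ^ d) - φ₀ (dil r lam x)|
          + |lam ^ d * (φ (dil r (l * lam) x) / (l * lam) ^ d) - lam ^ d * φ₀ x| := by
          rw [abs_sub_comm (lam ^ d * _)]
          exact abs_sub_le _ _ _ |>.trans (le_of_eq rfl)
      _ ≤ ε/2 + lam ^ d * (ε / (2 * lam ^ d)) := by
          refine add_le_add h1 ?_
          rw [← mul_sub, abs_mul, abs_of_pos hld]
          exact mul_le_mul_of_nonneg_left h2 hld.le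
      _ = ε := by field_simp; ring
  have : |φ₀ (dil r lam x) - lam ^ d * φ₀ x| ≤ 0 :=
    le_of_forall_pos_le_add (by intro ε hε; linarith [key ε hε])
  have := abs_nonpos_iff.1 this
  linarith [sub_eq_zero.1 this, this]

lemma homogInf_scale {n : ℕ} {r : Fin n → ℝ} {d : ℝ} {φ φinf : (Fin n → ℝ) → ℝ}
    (h : HomogInf r d φ φinf) {x : Fin n → ℝ} (hx : x ≠ 0) {lam : ℝ} (hlam : 0 < lam) :
    φinf (dil r lam x) = lam ^ d * φinf x := by
  have hld : (0:ℝ) < lam ^ d := Real.rpow_pos_of_pos hlam _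
  have key : ∀ ε > (0:ℝ), |φinf (dil r lam x) - lam ^ d * φinf x| ≤ ε := by
    intro ε hε
    obtain ⟨l₁, hl₁, hap₁⟩ := h.2.2.2 {dil r lam x} isCompact_singleton
      (nmem_singleton_zero (dil_ne_zero r hlam hx)) (ε/2) (by linarith)
    obtain ⟨l₂, hl₂, hap₂⟩ := h.2.2.2 {x} isCompact_singleton
      (nmem_singleton_zero hx) (ε/(2 * lam ^ d)) (by positivity)
    set l := max l₁ (l₂ / lam) with hldef
    have hlpos : 0 < l := lt_of_lt_of_le hl₁ (le_max_left _ _)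
    have h1 := hap₁ _ rfl l (le_max_left _ _)
    have h2 := hap₂ x rfl (l * lam)
      (by rw [ge_iff_le, ← div_mul_cancel₀ l₂ hlam.ne']
          exact mul_le_mul_of_nonneg_right (le_max_right _ _) hlam.le)
    rw [dil_dil r hlpos.le hlam.le] at h1
    have hmul : (l * lam) ^ d = l ^ d * lam ^ d := Real.mul_rpow hlpos.le hlam.le
    have hA : φ (dil r (l * lam) x) / l ^ d
        = lam ^ d * (φ (dil r (l * lam) x) / (l * lam) ^ d) := by
      rw [hmul]
      field_simp
    rw [hA] at h1
    calc |φinf (dil r lam x) - lam ^ d * φinf x|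
        ≤ |lam ^ d * (φ (dil r (l * lam) x) / (l * lam) ^ d) - φinf (dil r lam x)|
          + |lam ^ d * (φ (dil r (l * lam) x) / (l * lam) ^ d) - lam ^ d * φinf x| := by
          rw [abs_sub_comm (lam ^ d * _)]
          exact abs_sub_le _ _ _ |>.trans (le_of_eq rfl)
      _ ≤ ε/2 + lam ^ d * (ε / (2 * lam ^ d)) := by
          refine add_le_add h1 ?_
          rw [← mul_sub, abs_mul, abs_of_pos hld]
          exact mul_le_mul_of_nonneg_left h2 hld.le
      _ = ε := by field_simp; ring
  have : |φinf (dil r lam x) - lam ^ d * φinf x| ≤ 0 :=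
    le_of_forall_pos_le_add (by intro ε hε; linarith [key ε hε])
  have := abs_nonpos_iff.1 this
  linarith [sub_eq_zero.1 this, this]

lemma hnorm_decomp {n : ℕ} {r : Fin n → ℝ} (hr : ∀ i, 0 < r i) {x : Fin n → ℝ}
    (hx : x ≠ 0) : ∃ l y, 0 < l ∧ hnorm r y = 1 ∧ y ≠ 0 ∧ x = dil r l y ∧
      l = hnorm r x := by
  have hl : 0 < hnorm r x := hnorm_pos hr hx
  refine ⟨hnorm r x, dil r (hnorm r x)⁻¹ x, hl, ?_, dil_ne_zero r (inv_pos.2 hl) hx,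
    (dil_inv_self r hl x).symm, rfl⟩
  rw [hnorm_dil hr (inv_pos.2 hl), inv_mul_cancel₀ hl.ne']

lemma compact_gain_margin {n : ℕ} {f g : (Fin n → ℝ) → ℝ} (hf : Continuous f)
    (hg : Continuous g) {K : Set (Fin n → ℝ)} (hK : IsCompact K)
    (hg0 : ∀ x ∈ K, 0 ≤ g x) (h : ∀ x ∈ K, g x = 0 → f x < 0) :
    ∃ c : ℝ, 0 ≤ c ∧ ∃ δ : ℝ, 0 < δ ∧ ∀ x ∈ K, f x - c * g x ≤ -δ := by
  obtain ⟨c, hc0, hc⟩ := compact_gain hf hg hK hg0 h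
  rcases K.eq_empty_or_nonempty with hKe | hKne
  · exact ⟨c, hc0, 1, one_pos, by simp [hKe]⟩
  · have hFc : ContinuousOn (fun x => f x - c * g x) K :=
      (hf.sub (continuous_const.mul hg)).continuousOn
    obtain ⟨z, hz, hmax⟩ := hK.exists_isMaxOn hKne hFc
    refine ⟨c, hc0, -(f z - c * g z), by linarith [hc z hz], fun x hx => ?_⟩
    have h2 : f x - c * g x ≤ f z - c * g z := hmax hx
    linarith

/-- Key technical lemma for functions homogeneous in the bi-limit. -/
theorem key_technical_lemma {n : ℕ} (r0 rinf : Fin n → ℝ)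
    (hr0 : ∀ i, 0 < r0 i) (hrinf : ∀ i, 0 < rinf i) (d0 dinf : ℝ)
    (η γ η0 ηinf γ0 γinf : (Fin n → ℝ) → ℝ)
    (hγnn : ∀ x, 0 ≤ γ x)
    (hη0 : Homog0 r0 d0 η η0) (hηinf : HomogInf rinf dinf η ηinf)
    (hγ0 : Homog0 r0 d0 γ γ0) (hγinf : HomogInf rinf dinf γ γinf)
    (h1 : ∀ x : Fin n → ℝ, x ≠ 0 → γ x = 0 → η x < 0)
    (h2 : ∀ x : Fin n → ℝ, x ≠ 0 → γ0 x = 0 → η0 x < 0)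
    (h3 : ∀ x : Fin n → ℝ, x ≠ 0 → γinf x = 0 → ηinf x < 0) :
    ∃ cstar : ℝ, ∀ c ≥ cstar, ∀ x : Fin n → ℝ, x ≠ 0 →
      η x - c * γ x < 0 ∧ η0 x - c * γ0 x < 0 ∧ ηinf x - c * γinf x < 0 := by
  -- spheres
  set S0 : Set (Fin n → ℝ) := {x | hnorm r0 x = 1} with hS0def
  set Sinf : Set (Fin n → ℝ) := {x | hnorm rinf x = 1} with hSinfdef
  have hS0ne : ∀ x ∈ S0, x ≠ 0 := by
    intro x hx h0
    subst h0
    have : hnorm r0 (0 : Fin n → ℝ) = 0 := (hnorm_eq_zero hr0).2 rfl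
    rw [hx] at this; exact one_ne_zero this
  have hSinfne : ∀ x ∈ Sinf, x ≠ 0 := by
    intro x hx h0
    subst h0
    have : hnorm rinf (0 : Fin n → ℝ) = 0 := (hnorm_eq_zero hrinf).2 rfl
    rw [hx] at this; exact one_ne_zero this
  have hS0nmem : (0 : Fin n → ℝ) ∉ S0 := fun h => hS0ne 0 h rfl
  have hSinfnmem : (0 : Fin n → ℝ) ∉ Sinf := fun h => hSinfne 0 h rfl
  -- gains with margins on the spheres for the approximating functions
  obtain ⟨c0, hc0nn, δ0, hδ0pos, hδ0⟩ :=
    compact_gain_margin hη0.2.1 hγ0.2.1 (sphere_compact hr0)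
      (fun x hx => homog0_nonneg hγ0 hγnn (hS0ne x hx))
      (fun x hx => h2 x (hS0ne x hx))
  obtain ⟨cI, hcInn, δI, hδIpos, hδI⟩ :=
    compact_gain_margin hηinf.2.1 hγinf.2.1 (sphere_compact hrinf)
      (fun x hx => homogInf_nonneg hγinf hγnn (hSinfne x hx))
      (fun x hx => h3 x (hSinfne x hx))
  -- approximation radii
  have hε0pos : 0 < δ0 / (2 * (1 + c0)) := by positivity
  have hεIpos : 0 < δI / (2 * (1 + cI)) := by positivity
  obtain ⟨l₁, hl₁, hap₁⟩ := hη0.2.2.2 S0 (sphere_compact hr0) hS0nmem _ hε0pos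
  obtain ⟨l₂, hl₂, hap₂⟩ := hγ0.2.2.2 S0 (sphere_compact hr0) hS0nmem _ hε0pos
  obtain ⟨l₃, hl₃, hap₃⟩ := hηinf.2.2.2 Sinf (sphere_compact hrinf) hSinfnmem _ hεIpos
  obtain ⟨l₄, hl₄, hap₄⟩ := hγinf.2.2.2 Sinf (sphere_compact hrinf) hSinfnmem _ hεIpos
  set L0 : ℝ := min l₁ l₂ with hL0def
  set LI : ℝ := max l₃ l₄ with hLIdef
  have hL0pos : 0 < L0 := lt_min hl₁ hl₂
  -- near-zero region
  have near0 : ∀ x : Fin n → ℝ, x ≠ 0 → hnorm r0 x ≤ L0 → η x - c0 * γ x < 0 := by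
    intro x hx hxL
    obtain ⟨l, y, hl, hy1, hyne, hxy, hleq⟩ := hnorm_decomp hr0 hx
    have hyS : y ∈ S0 := hy1
    have hlL : l ≤ L0 := by rw [hleq]; exact hxL
    have ha := hap₁ y hyS l hl (hlL.trans (min_le_left _ _))
    have hb := hap₂ y hyS l hl (hlL.trans (min_le_right _ _))
    rw [← hxy] at ha hb
    have hld : (0:ℝ) < l ^ d0 := Real.rpow_pos_of_pos hl _
    have key : η x - c0 * γ x = l ^ d0 * (η x / l ^ d0 - c0 * (γ x / l ^ d0)) := by
      field_simp
    rw [key]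
    refine mul_neg_of_pos_of_neg hld ?_
    have hδy := hδ0 y hyS
    have ha' := abs_le.1 ha
    have hb' := abs_le.1 hb
    have hεeq : δ0 / (2 * (1 + c0)) * (1 + c0) = δ0 / 2 := by
      field_simp
    nlinarith [ha'.2, hδy, hδ0pos, hεeq,
      mul_le_mul_of_nonneg_left hb'.1 hc0nn]
  -- near-infinity region
  have nearI : ∀ x : Fin n → ℝ, x ≠ 0 → LI ≤ hnorm rinf x → η x - cI * γ x < 0 := by
    intro x hx hxL
    obtain ⟨l, y, hl, hy1, hyne, hxy, hleq⟩ := hnorm_decomp hrinf hx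
    have hyS : y ∈ Sinf := hy1
    have hlL : LI ≤ l := by rw [hleq]; exact hxL
    have ha := hap₃ y hyS l ((le_max_left _ _).trans hlL)
    have hb := hap₄ y hyS l ((le_max_right _ _).trans hlL)
    rw [← hxy] at ha hb
    have hld : (0:ℝ) < l ^ dinf := Real.rpow_pos_of_pos hl _
    have key : η x - cI * γ x = l ^ dinf * (η x / l ^ dinf - cI * (γ x / l ^ dinf)) := by
      field_simp
    rw [key]
    refine mul_neg_of_pos_of_neg hld ?_
    have hδy := hδI y hyS
    have ha' := abs_le.1 ha
    have hb' := abs_le.1 hb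
    have hεeq : δI / (2 * (1 + cI)) * (1 + cI) = δI / 2 := by
      field_simp
    nlinarith [ha'.2, hδy, hδIpos, hεeq,
      mul_le_mul_of_nonneg_left hb'.1 hcInn]
  -- middle region
  obtain ⟨cM, hcMnn, hM⟩ :=
    compact_gain hη0.1 hγ0.1 (annulus_compact hr0 hrinf L0 LI)
      (fun x _ => hγnn x)
      (fun x hx => h1 x (fun h0 => by
        rw [h0] at hx
        have h01 : L0 ≤ hnorm r0 (0 : Fin n → ℝ) := hx.1
        rw [(hnorm_eq_zero hr0).2 rfl] at h01
        linarith))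
  -- global statements for approximating functions
  have glob0 : ∀ c : ℝ, c0 ≤ c → ∀ x : Fin n → ℝ, x ≠ 0 → η0 x - c * γ0 x < 0 := by
    intro c hc x hx
    obtain ⟨l, y, hl, hy1, hyne, hxy, _⟩ := hnorm_decomp hr0 hx
    have hyS : y ∈ S0 := hy1
    have hη0x : η0 x = l ^ d0 * η0 y := by rw [hxy]; exact homog0_scale hη0 hyne hl
    have hγ0x : γ0 x = l ^ d0 * γ0 y := by rw [hxy]; exact homog0_scale hγ0 hyne hl
    have hld : (0:ℝ) < l ^ d0 := Real.rpow_pos_of_pos hl _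
    have hγ0y : 0 ≤ γ0 y := homog0_nonneg hγ0 hγnn hyne
    have hy : η0 y - c * γ0 y < 0 := by
      have hmul := mul_le_mul_of_nonneg_right hc hγ0y
      have := hδ0 y hyS
      linarith
    calc η0 x - c * γ0 x = l ^ d0 * (η0 y - c * γ0 y) := by rw [hη0x, hγ0x]; ring
      _ < 0 := mul_neg_of_pos_of_neg hld hy
  have globI : ∀ c : ℝ, cI ≤ c → ∀ x : Fin n → ℝ, x ≠ 0 → ηinf x - c * γinf x < 0 := by
    intro c hc x hx
    obtain ⟨l, y, hl, hy1, hyne, hxy, _⟩ := hnorm_decomp hrinf hx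
    have hyS : y ∈ Sinf := hy1
    have hηx : ηinf x = l ^ dinf * ηinf y := by rw [hxy]; exact homogInf_scale hηinf hyne hl
    have hγx : γinf x = l ^ dinf * γinf y := by rw [hxy]; exact homogInf_scale hγinf hyne hl
    have hld : (0:ℝ) < l ^ dinf := Real.rpow_pos_of_pos hl _
    have hγy : 0 ≤ γinf y := homogInf_nonneg hγinf hγnn hyne
    have hy : ηinf y - c * γinf y < 0 := by
      have hmul := mul_le_mul_of_nonneg_right hc hγy
      have := hδI y hyS
      linarith
    calc ηinf x - c * γinf x = l ^ dinf * (ηinf y - c * γinf y) := by rw [hηx, hγx]; ring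
      _ < 0 := mul_neg_of_pos_of_neg hld hy
  -- conclusion
  refine ⟨max (max c0 cI) cM, fun c hc x hx => ?_⟩
  have hcc0 : c0 ≤ c := le_trans (le_max_left _ _) (le_trans (le_max_left _ _) hc)
  have hccI : cI ≤ c := le_trans (le_max_right _ _) (le_trans (le_max_left _ _) hc)
  have hccM : cM ≤ c := le_trans (le_max_right _ _) hc
  refine ⟨?_, glob0 c hcc0 x hx, globI c hccI x hx⟩
  have hγx := hγnn x
  by_cases hA : hnorm r0 x ≤ L0
  · have h5 := near0 x hx hA
    have h6 := mul_le_mul_of_nonneg_right hcc0 hγx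
    linarith
  · by_cases hB : LI ≤ hnorm rinf x
    · have h5 := nearI x hx hB
      have h6 := mul_le_mul_of_nonneg_right hccI hγx
      linarith
    · have hxK : x ∈ {z : Fin n → ℝ | L0 ≤ hnorm r0 z ∧ hnorm rinf z ≤ LI} :=
        ⟨(not_le.1 hA).le, (not_le.1 hB).le⟩
      have h5 := hM x hxK
      have h6 := mul_le_mul_of_nonneg_right hccM hγx
      linarith
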